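/- Let A be an N×N nonnegative row-stochastic matrix whose associated directed graph G[A] (edge i→j iff A i j > 0) is strongly connected and aperiodic, and consider the continuous-time dynamics x'(t) = (A − I_N) x(t), x(0) = x₀ ∈ ℝ^N (so x(t) = exp(t(A − I_N)) x₀). Then there exist a vector ζ ∈ ℝ^N with nonnegative entries summing to 1 satisfying ζᵀ A = ζᵀ, and constants C > 0 and α > 0, such that ‖x(t) − (ζᵀ x₀) 𝟙_N‖ ≤ C · e^{−α t} · ‖x₀‖ for all t ≥ 0. -/

import Mathlib

open Matrix Finset

/-- A walk of length `k` from `i` to `j` in the directed graph `G[W]`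
(edge `a → b` iff `W a b > 0`). -/
def Matrix.HasWalkOfLength {N : ℕ} (W : Matrix (Fin N) (Fin N) ℝ) (k : ℕ)
    (i j : Fin N) : Prop :=
  ∃ f : Fin (k + 1) → Fin N, f 0 = i ∧ f (Fin.last k) = j ∧
    ∀ t : Fin k, 0 < W (f t.castSucc) (f t.succ)

/-- `G[W]` is strongly connected: there is a directed path from every node to
every other node. -/
def Matrix.StronglyConnectedGraph {N : ℕ} (W : Matrix (Fin N) (Fin N) ℝ) : Prop :=
  ∀ i j : Fin N, i ≠ j → ∃ k : ℕ, 0 < k ∧ W.HasWalkOfLength k i j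

/-- `k` is the length of some directed cycle of `G[W]`: a directed closed walk of
positive length with no repeated nodes except the initial/final one. -/
def Matrix.IsCycleLength {N : ℕ} (W : Matrix (Fin N) (Fin N) ℝ) (k : ℕ) : Prop :=
  0 < k ∧ ∃ f : Fin (k + 1) → Fin N,
    f (Fin.last k) = f 0 ∧
    (∀ t : Fin k, 0 < W (f t.castSucc) (f t.succ)) ∧
    Function.Injective fun t : Fin k => f t.castSucc

/-- `G[W]` is aperiodic: the gcd of the lengths of all directed cycles equals `1`,
i.e. the only natural number dividing every cycle length is `1`. -/
def Matrix.AperiodicGraph {N : ℕ} (W : Matrix (Fin N) (Fin N) ℝ) : Prop :=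
  ∀ d : ℕ, (∀ k : ℕ, W.IsCycleLength k → d ∣ k) → d = 1

namespace FDGAux

variable {N : ℕ}

lemma pow_entry_nonneg (A : Matrix (Fin N) (Fin N) ℝ) (h : ∀ i j, 0 ≤ A i j) (n : ℕ) :
    ∀ i j, 0 ≤ (A ^ n) i j := by
  induction n with
  | zero => intro i j; by_cases hij : i = j <;> simp [pow_zero, Matrix.one_apply, hij]
  | succ n ih =>
    intro i j
    rw [pow_succ, Matrix.mul_apply]
    exact Finset.sum_nonneg fun k _ => mul_nonneg (ih i k) (h k j)

lemma pow_rowsum (A : Matrix (Fin N) (Fin N) ℝ) (hr : ∀ i, ∑ j, A i j = 1) (n : ℕ) :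
    ∀ i, ∑ j, (A ^ n) i j = 1 := by
  induction n with
  | zero => intro i; simp [pow_zero, Matrix.one_apply]
  | succ n ih =>
    intro i
    simp_rw [pow_succ, Matrix.mul_apply]
    rw [Finset.sum_comm]
    calc ∑ k, (∑ j, (A ^ n) i k * A k j) = ∑ k, (A ^ n) i k * ∑ j, A k j := by
          simp_rw [Finset.mul_sum]
      _ = 1 := by simp_rw [hr]; simpa using ih i

lemma pow_entry_le_one (A : Matrix (Fin N) (Fin N) ℝ) (h : ∀ i j, 0 ≤ A i j)
    (hr : ∀ i, ∑ j, A i j = 1) (n : ℕ) (i j : Fin N) : (A ^ n) i j ≤ 1 := by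
  calc (A ^ n) i j ≤ ∑ k, (A ^ n) i k :=
        Finset.single_le_sum (fun k _ => pow_entry_nonneg A h n i k) (Finset.mem_univ j)
    _ = 1 := pow_rowsum A hr n i

lemma entry_summable (A : Matrix (Fin N) (Fin N) ℝ) (h : ∀ i j, 0 ≤ A i j)
    (hr : ∀ i, ∑ j, A i j = 1) (t : ℝ) (ht : 0 ≤ t) (i j : Fin N) :
    Summable (fun n : ℕ => (t ^ n / ((n.factorial : ℝ))) * (A ^ n) i j) := by
  apply Summable.of_nonneg_of_le
    (fun n => mul_nonneg (by positivity) (pow_entry_nonneg A h n i j))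
    (fun n => ?_) (Real.summable_pow_div_factorial t)
  calc (t ^ n / ((n.factorial : ℝ))) * (A ^ n) i j ≤ t ^ n / ((n.factorial : ℝ)) * 1 := by
        apply mul_le_mul_of_nonneg_left (pow_entry_le_one A h hr n i j) (by positivity)
    _ = t ^ n / ((n.factorial : ℝ)) := mul_one _

lemma exp_smul_entry (A : Matrix (Fin N) (Fin N) ℝ) (h : ∀ i j, 0 ≤ A i j)
    (hr : ∀ i, ∑ j, A i j = 1) (t : ℝ) (ht : 0 ≤ t) (i j : Fin N) :
    (NormedSpace.exp (t • A)) i j = ∑' n : ℕ, (t ^ n / ((n.factorial : ℝ))) * (A ^ n) i j := by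
  have key : ∀ (n : ℕ) (a b : Fin N), (((n.factorial : ℝ))⁻¹ • (t • A) ^ n) a b
      = (t ^ n / ((n.factorial : ℝ))) * (A ^ n) a b := by
    intro n a b
    rw [smul_pow]
    simp only [Matrix.smul_apply, smul_eq_mul]
    ring
  have hs : Summable (fun n : ℕ => ((n.factorial : ℝ))⁻¹ • (t • A) ^ n) := by
    refine Pi.summable.mpr ?_
    intro a
    rw [Pi.summable]
    intro b
    simpa [key] using entry_summable A h hr t ht a b
  have hexp : NormedSpace.exp (t • A) = ∑' n : ℕ, ((n.factorial : ℝ))⁻¹ • (t • A) ^ n := by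
    rw [NormedSpace.exp_eq_tsum ℝ]
  have e1 : (∑' n : ℕ, ((n.factorial : ℝ))⁻¹ • (t • A) ^ n) i
      = ∑' n : ℕ, (((n.factorial : ℝ))⁻¹ • (t • A) ^ n) i := tsum_apply hs
  rw [hexp, e1, tsum_apply]
  · exact tsum_congr fun n => key n i j
  · exact (Pi.summable).mp hs i

lemma exp_sub_one_eq (A : Matrix (Fin N) (Fin N) ℝ) (t : ℝ) :
    NormedSpace.exp (t • (A - 1)) = Real.exp (-t) • NormedSpace.exp (t • A) := by
  have h1 : t • (A - 1) = (-t) • (1 : Matrix (Fin N) (Fin N) ℝ) + t • A := by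
    rw [smul_sub, neg_smul]; abel
  have hc : Commute ((-t) • (1 : Matrix (Fin N) (Fin N) ℝ)) (t • A) :=
    (Commute.one_left (t • A)).smul_left (-t)
  rw [h1, Matrix.exp_add_of_commute _ _ hc]
  have h2 : (-t) • (1 : Matrix (Fin N) (Fin N) ℝ) = Matrix.diagonal (fun _ => -t) := by
    ext i j
    by_cases h : i = j <;> simp [Matrix.diagonal_apply, Matrix.one_apply, h]
  rw [h2, Matrix.exp_diagonal]
  have h3 : (NormedSpace.exp fun _ : Fin N => -t) = fun _ : Fin N => Real.exp (-t) := by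
    funext x
    rw [Pi.coe_exp _ x, Real.exp_eq_exp_ℝ]
  rw [h3]
  ext i j
  by_cases h : i = j <;>
    simp [Matrix.diagonal_apply, Matrix.mul_apply, Matrix.diagonal, h, Matrix.smul_apply]

lemma expE_entry (A : Matrix (Fin N) (Fin N) ℝ) (h : ∀ i j, 0 ≤ A i j)
    (hr : ∀ i, ∑ j, A i j = 1) (t : ℝ) (ht : 0 ≤ t) (i j : Fin N) :
    (NormedSpace.exp (t • (A - 1))) i j
      = Real.exp (-t) * ∑' n : ℕ, (t ^ n / ((n.factorial : ℝ))) * (A ^ n) i j := by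
  rw [exp_sub_one_eq, Matrix.smul_apply, smul_eq_mul, exp_smul_entry A h hr t ht]

lemma expE_nonneg (A : Matrix (Fin N) (Fin N) ℝ) (h : ∀ i j, 0 ≤ A i j)
    (hr : ∀ i, ∑ j, A i j = 1) (t : ℝ) (ht : 0 ≤ t) (i j : Fin N) :
    0 ≤ (NormedSpace.exp (t • (A - 1))) i j := by
  rw [expE_entry A h hr t ht]
  exact mul_nonneg (Real.exp_nonneg _)
    (tsum_nonneg fun n => mul_nonneg (by positivity) (pow_entry_nonneg A h n i j))

lemma tsum_pow_fact (t : ℝ) : ∑' n : ℕ, t ^ n / ((n.factorial : ℝ)) = Real.exp t := by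
  rw [Real.exp_eq_exp_ℝ, NormedSpace.exp_eq_tsum_div]

lemma expE_rowsum (A : Matrix (Fin N) (Fin N) ℝ) (h : ∀ i j, 0 ≤ A i j)
    (hr : ∀ i, ∑ j, A i j = 1) (t : ℝ) (ht : 0 ≤ t) (i : Fin N) :
    ∑ j, (NormedSpace.exp (t • (A - 1))) i j = 1 := by
  simp_rw [expE_entry A h hr t ht]
  rw [← Finset.mul_sum]
  rw [← Summable.tsum_finsetSum (fun j _ => entry_summable A h hr t ht i j)]
  have hinner : ∀ n : ℕ, (∑ j, (t ^ n / ((n.factorial : ℝ))) * (A ^ n) i j)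
      = t ^ n / ((n.factorial : ℝ)) := by
    intro n
    rw [← Finset.mul_sum, pow_rowsum A hr n i, mul_one]
  simp_rw [hinner, tsum_pow_fact]
  rw [← Real.exp_add]
  simp

lemma walk_pos (A : Matrix (Fin N) (Fin N) ℝ) (h : ∀ i j, 0 ≤ A i j) :
    ∀ {k : ℕ} {i j : Fin N}, A.HasWalkOfLength k i j → 0 < (A ^ k) i j := by
  intro k
  induction k with
  | zero =>
    intro i j hw
    obtain ⟨f, hf0, hfl, _⟩ := hw
    have hij : i = j := by rw [← hf0, ← hfl]; rfl
    subst hij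
    simp [Matrix.one_apply]
  | succ k ih =>
    intro i j hw
    obtain ⟨f, hf0, hfl, hstep⟩ := hw
    set m := f (Fin.last k).castSucc with hm
    have hw' : A.HasWalkOfLength k i m := by
      refine ⟨fun t => f t.castSucc, by simpa using hf0, rfl, fun t => ?_⟩
      have := hstep t.castSucc
      rwa [Fin.succ_castSucc] at this
    have hlast : 0 < A m j := by
      have := hstep (Fin.last k)
      rwa [Fin.succ_last, hfl] at this
    rw [pow_succ, Matrix.mul_apply]
    refine Finset.sum_pos' (fun l _ => mul_nonneg (pow_entry_nonneg A h k i l) (h l j))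
      ⟨m, Finset.mem_univ m, mul_pos (ih hw') hlast⟩

lemma vecMul_pow (A : Matrix (Fin N) (Fin N) ℝ) (v : Fin N → ℝ) (hv : v ᵥ* A = v) (n : ℕ) :
    v ᵥ* (A ^ n) = v := by
  induction n with
  | zero => simp [pow_zero, Matrix.vecMul_one]
  | succ n ih => rw [pow_succ, ← Matrix.vecMul_vecMul, ih, hv]

lemma vecMul_expE (A : Matrix (Fin N) (Fin N) ℝ) (h : ∀ i j, 0 ≤ A i j)
    (hr : ∀ i, ∑ j, A i j = 1) (v : Fin N → ℝ) (hv : v ᵥ* A = v) (t : ℝ) (ht : 0 ≤ t) :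
    v ᵥ* (NormedSpace.exp (t • (A - 1))) = v := by
  funext j
  have hvm : ∀ M : Matrix (Fin N) (Fin N) ℝ, (v ᵥ* M) j = ∑ k, v k * M k j := by
    intro M; simp [Matrix.vecMul, dotProduct]
  rw [hvm]
  simp_rw [expE_entry A h hr t ht]
  have step1 : ∀ k : Fin N,
      v k * (Real.exp (-t) * ∑' n : ℕ, (t ^ n / ((n.factorial : ℝ))) * (A ^ n) k j)
      = Real.exp (-t) * ∑' n : ℕ, v k * ((t ^ n / ((n.factorial : ℝ))) * (A ^ n) k j) := by
    intro k
    rw [tsum_mul_left]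
    ring
  simp_rw [step1]
  rw [← Finset.mul_sum]
  rw [← Summable.tsum_finsetSum (fun k _ => (entry_summable A h hr t ht k j).mul_left (v k))]
  have step2 : ∀ n : ℕ, (∑ k, v k * ((t ^ n / ((n.factorial : ℝ))) * (A ^ n) k j))
      = (t ^ n / ((n.factorial : ℝ))) * v j := by
    intro n
    have hvp : ∑ k, v k * (A ^ n) k j = v j := by
      have := congrFun (vecMul_pow A v hv n) j
      simpa [Matrix.vecMul, dotProduct] using this
    calc ∑ k, v k * ((t ^ n / ((n.factorial : ℝ))) * (A ^ n) k j)
        = (t ^ n / ((n.factorial : ℝ))) * ∑ k, v k * (A ^ n) k j := by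
          rw [Finset.mul_sum]; exact Finset.sum_congr rfl fun k _ => by ring
      _ = (t ^ n / ((n.factorial : ℝ))) * v j := by rw [hvp]
  simp_rw [step2]
  rw [tsum_mul_right, tsum_pow_fact, ← mul_assoc, ← Real.exp_add]
  simp

section Osc

variable [Nonempty (Fin N)]

noncomputable def oSup (x : Fin N → ℝ) : ℝ := Finset.univ.sup' Finset.univ_nonempty x
noncomputable def oInf (x : Fin N → ℝ) : ℝ := Finset.univ.inf' Finset.univ_nonempty x

lemma oInf_le (x : Fin N → ℝ) (i : Fin N) : oInf x ≤ x i :=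
  Finset.inf'_le x (Finset.mem_univ i)

lemma le_oSup (x : Fin N → ℝ) (i : Fin N) : x i ≤ oSup x :=
  Finset.le_sup' x (Finset.mem_univ i)

lemma oInf_le_oSup (x : Fin N → ℝ) : oInf x ≤ oSup x := by
  obtain ⟨i⟩ := (inferInstance : Nonempty (Fin N))
  exact le_trans (oInf_le x i) (le_oSup x i)

lemma mulVec_upper (Q : Matrix (Fin N) (Fin N) ℝ) (δ : ℝ) (hδ : 0 ≤ δ)
    (hq : ∀ i j, δ ≤ Q i j) (hqr : ∀ i, ∑ j, Q i j = 1) (x : Fin N → ℝ) (i : Fin N) :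
    (Q *ᵥ x) i ≤ oSup x - δ * (oSup x - oInf x) := by
  obtain ⟨k0, -, hk0⟩ := Finset.exists_mem_eq_inf' (Finset.univ_nonempty) x
  have hQx : (Q *ᵥ x) i = ∑ k, Q i k * x k := by simp [Matrix.mulVec, dotProduct]
  have split : ∑ k, Q i k * x k
      = Q i k0 * x k0 + ∑ k ∈ Finset.univ.erase k0, Q i k * x k :=
    (Finset.add_sum_erase Finset.univ _ (Finset.mem_univ k0)).symm
  have hbound : ∑ k ∈ Finset.univ.erase k0, Q i k * x k
      ≤ ∑ k ∈ Finset.univ.erase k0, Q i k * oSup x :=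
    Finset.sum_le_sum fun k _ =>
      mul_le_mul_of_nonneg_left (le_oSup x k) (le_trans hδ (hq i k))
  have hsumerase : ∑ k ∈ Finset.univ.erase k0, Q i k * oSup x = (1 - Q i k0) * oSup x := by
    rw [← Finset.sum_mul, Finset.sum_erase_eq_sub (Finset.mem_univ k0), hqr i]
  have h1 : oInf x ≤ oSup x := oInf_le_oSup x
  have h2 : δ ≤ Q i k0 := hq i k0
  have hx0 : x k0 = oInf x := hk0.symm
  have hmul : δ * (oSup x - oInf x) ≤ Q i k0 * (oSup x - oInf x) :=
    mul_le_mul_of_nonneg_right h2 (sub_nonneg.2 h1)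
  rw [hQx, split]
  nlinarith [hbound, hsumerase]

lemma mulVec_lower (Q : Matrix (Fin N) (Fin N) ℝ) (δ : ℝ) (hδ : 0 ≤ δ)
    (hq : ∀ i j, δ ≤ Q i j) (hqr : ∀ i, ∑ j, Q i j = 1) (x : Fin N → ℝ) (i : Fin N) :
    oInf x + δ * (oSup x - oInf x) ≤ (Q *ᵥ x) i := by
  obtain ⟨k0, -, hk0⟩ := Finset.exists_mem_eq_sup' (Finset.univ_nonempty) x
  have hQx : (Q *ᵥ x) i = ∑ k, Q i k * x k := by simp [Matrix.mulVec, dotProduct]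
  have split : ∑ k, Q i k * x k
      = Q i k0 * x k0 + ∑ k ∈ Finset.univ.erase k0, Q i k * x k :=
    (Finset.add_sum_erase Finset.univ _ (Finset.mem_univ k0)).symm
  have hbound : ∑ k ∈ Finset.univ.erase k0, Q i k * oInf x
      ≤ ∑ k ∈ Finset.univ.erase k0, Q i k * x k :=
    Finset.sum_le_sum fun k _ =>
      mul_le_mul_of_nonneg_left (oInf_le x k) (le_trans hδ (hq i k))
  have hsumerase : ∑ k ∈ Finset.univ.erase k0, Q i k * oInf x = (1 - Q i k0) * oInf x := by
    rw [← Finset.sum_mul, Finset.sum_erase_eq_sub (Finset.mem_univ k0), hqr i]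
  have h1 : oInf x ≤ oSup x := oInf_le_oSup x
  have h2 : δ ≤ Q i k0 := hq i k0
  have hx0 : x k0 = oSup x := hk0.symm
  have hmul : δ * (oSup x - oInf x) ≤ Q i k0 * (oSup x - oInf x) :=
    mul_le_mul_of_nonneg_right h2 (sub_nonneg.2 h1)
  rw [hQx, split]
  nlinarith [hbound, hsumerase]

lemma osc_step (Q : Matrix (Fin N) (Fin N) ℝ) (δ : ℝ) (hδ : 0 ≤ δ)
    (hq : ∀ i j, δ ≤ Q i j) (hqr : ∀ i, ∑ j, Q i j = 1) (x : Fin N → ℝ) :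
    oSup (Q *ᵥ x) - oInf (Q *ᵥ x) ≤ (1 - 2 * δ) * (oSup x - oInf x) := by
  have h1 : oSup (Q *ᵥ x) ≤ oSup x - δ * (oSup x - oInf x) :=
    Finset.sup'_le _ _ fun i _ => mulVec_upper Q δ hδ hq hqr x i
  have h2 : oInf x + δ * (oSup x - oInf x) ≤ oInf (Q *ᵥ x) :=
    Finset.le_inf' _ _ fun i _ => mulVec_lower Q δ hδ hq hqr x i
  linarith

lemma dot_sandwich (ζ x : Fin N → ℝ) (hζ0 : ∀ i, 0 ≤ ζ i) (hζ1 : ∑ i, ζ i = 1) :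
    oInf x ≤ ζ ⬝ᵥ x ∧ ζ ⬝ᵥ x ≤ oSup x := by
  constructor
  · calc oInf x = ∑ i, ζ i * oInf x := by rw [← Finset.sum_mul, hζ1, one_mul]
      _ ≤ ∑ i, ζ i * x i :=
        Finset.sum_le_sum fun i _ => mul_le_mul_of_nonneg_left (oInf_le x i) (hζ0 i)
      _ = ζ ⬝ᵥ x := by simp [dotProduct]
  · calc ζ ⬝ᵥ x = ∑ i, ζ i * x i := by simp [dotProduct]
      _ ≤ ∑ i, ζ i * oSup x :=
        Finset.sum_le_sum fun i _ => mul_le_mul_of_nonneg_left (le_oSup x i) (hζ0 i)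
      _ = oSup x := by rw [← Finset.sum_mul, hζ1, one_mul]

end Osc

lemma normalize_stationary (A : Matrix (Fin N) (Fin N) ℝ) (v : Fin N → ℝ)
    (hv : v ᵥ* A = v) (h0 : ∀ k, 0 ≤ v k) (hs : 0 < ∑ k, v k) :
    ∃ ζ : Fin N → ℝ, (∀ i, 0 ≤ ζ i) ∧ (∑ i, ζ i = 1) ∧ ζ ᵥ* A = ζ := by
  refine ⟨(∑ k, v k)⁻¹ • v, fun i => mul_nonneg (inv_nonneg.2 hs.le) (h0 i), ?_, ?_⟩
  · simp only [Pi.smul_apply, smul_eq_mul, ← Finset.mul_sum]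
    field_simp
  · rw [Matrix.smul_vecMul, hv]

lemma exists_stationary (A P : Matrix (Fin N) (Fin N) ℝ) [Nonempty (Fin N)]
    (hrA : ∀ i, ∑ j, A i j = 1)
    (hPpos : ∀ i j, 0 < P i j) (hPr : ∀ i, ∑ j, P i j = 1)
    (hfix : ∀ v : Fin N → ℝ, v ᵥ* A = v → v ᵥ* P = v) :
    ∃ ζ : Fin N → ℝ, (∀ i, 0 ≤ ζ i) ∧ (∑ i, ζ i = 1) ∧ ζ ᵥ* A = ζ := by
  -- an eigenvector exists since A - 1 is singular (as (A-1) 𝟙 = 0)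
  have hones : (A - 1) *ᵥ (fun _ => (1 : ℝ)) = 0 := by
    have h1 : (1 : Matrix (Fin N) (Fin N) ℝ) *ᵥ (fun _ => (1 : ℝ)) = fun _ => (1 : ℝ) :=
      Matrix.one_mulVec _
    rw [Matrix.sub_mulVec, h1]
    funext i
    simp [Matrix.mulVec, dotProduct, hrA i]
  have hdet : (A - 1).det = 0 := by
    rw [← Matrix.exists_mulVec_eq_zero_iff]
    refine ⟨fun _ => (1 : ℝ), ?_, hones⟩
    intro hcon
    have := congrFun hcon (Classical.arbitrary (Fin N))
    norm_num at this
  have hdetT : ((A - 1)ᵀ).det = 0 := by rw [Matrix.det_transpose]; exact hdet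
  obtain ⟨w, hw0, hww⟩ := Matrix.exists_mulVec_eq_zero_iff.mpr hdetT
  have hwA : w ᵥ* A = w := by
    have h1 : (A - 1)ᵀ *ᵥ w = w ᵥ* (A - 1) := Matrix.mulVec_transpose _ w
    rw [hww] at h1
    have h2 : w ᵥ* (A - 1) = w ᵥ* A - w := by
      rw [Matrix.vecMul_sub, Matrix.vecMul_one]
    rw [h2] at h1
    exact sub_eq_zero.mp h1.symm
  have hwP : w ᵥ* P = w := hfix w hwA

  have hwsum : ∀ j, w j = ∑ k, w k * P k j := by
    intro j
    conv_lhs => rw [← hwP]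
    simp [Matrix.vecMul, dotProduct]
  have habs_le : ∀ j, |w j| ≤ ∑ k, |w k| * P k j := by
    intro j
    rw [hwsum j]
    refine le_trans (Finset.abs_sum_le_sum_abs _ _) (le_of_eq ?_)
    exact Finset.sum_congr rfl fun k _ => by rw [abs_mul, abs_of_pos (hPpos k j)]
  have hsums : ∑ j, (∑ k, |w k| * P k j) = ∑ j, |w j| := by
    rw [Finset.sum_comm]
    calc ∑ k, (∑ j, |w k| * P k j) = ∑ k, |w k| * ∑ j, P k j := by
          simp_rw [Finset.mul_sum]
      _ = ∑ k, |w k| := by simp_rw [hPr]; simp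
  have heq : ∀ j, |w j| = ∑ k, |w k| * P k j := by
    have := (Finset.sum_eq_sum_iff_of_le (fun j (_ : j ∈ Finset.univ) => habs_le j)).mp
      hsums.symm
    exact fun j => this j (Finset.mem_univ j)
  set u : Fin N → ℝ := fun k => |w k| - w k with hu_def
  have hu0 : ∀ k, 0 ≤ u k := fun k => sub_nonneg.2 (le_abs_self _)
  have huP : ∀ j, u j = ∑ k, u k * P k j := by
    intro j
    calc u j = (∑ k, |w k| * P k j) - ∑ k, w k * P k j := by
          rw [← heq j, ← hwsum j]
      _ = ∑ k, u k * P k j := by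
          rw [← Finset.sum_sub_distrib]
          exact Finset.sum_congr rfl fun k _ => by simp only [hu_def]; ring
  by_cases hu : ∀ k, u k = 0
  · have hw_nonneg : ∀ k, 0 ≤ w k := by
      intro k
      have := hu k
      simp only [hu_def, sub_eq_zero] at this
      rw [← this]
      exact abs_nonneg _
    refine normalize_stationary A w hwA hw_nonneg ?_
    obtain ⟨k1, hk1⟩ := Function.ne_iff.mp hw0
    have hk1' : 0 < w k1 := lt_of_le_of_ne (hw_nonneg k1) (Ne.symm hk1)
    exact Finset.sum_pos' (fun k _ => hw_nonneg k) ⟨k1, Finset.mem_univ k1, hk1'⟩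
  · push_neg at hu
    obtain ⟨k0, hk0⟩ := hu
    have hk0pos : 0 < u k0 := lt_of_le_of_ne (hu0 k0) (Ne.symm hk0)
    have hall : ∀ j, 0 < u j := by
      intro j
      rw [huP j]
      exact Finset.sum_pos' (fun k _ => mul_nonneg (hu0 k) (hPpos k j).le)
        ⟨k0, Finset.mem_univ k0, mul_pos hk0pos (hPpos k0 j)⟩
    have hwneg : ∀ k, 0 ≤ -w k := by
      intro k
      have h1 : w k < |w k| := by have := hall k; simp only [hu_def] at this; linarith
      rcases abs_cases (w k) with ⟨he, _⟩ | ⟨_, hlt⟩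
      · rw [he] at h1; linarith
      · linarith
    have hvA : (-w) ᵥ* A = -w := by rw [Matrix.neg_vecMul, hwA]
    refine normalize_stationary A (-w) hvA (fun k => hwneg k) ?_
    obtain ⟨k1, hk1⟩ := Function.ne_iff.mp hw0
    have hk1' : 0 < -w k1 := lt_of_le_of_ne (hwneg k1) (by simpa using hk1)
    exact Finset.sum_pos' (fun k _ => hwneg k) ⟨k1, Finset.mem_univ k1, hk1'⟩

end FDGAux

open FDGAux

/-- exponential convergence to consensus for the continuous-time
(GRAND-type) French–DeGroot dynamics `x'(t) = (A − I) x(t)`, i.e.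
`x(t) = exp(t(A − I)) x₀`, when `G[A]` is strongly connected and aperiodic. -/



theorem continuous_french_degroot_consensus {N : ℕ}
    (A : Matrix (Fin N) (Fin N) ℝ)
    (hnonneg : ∀ i j, 0 ≤ A i j)
    (hrow : ∀ i, ∑ j, A i j = 1)
    (hsc : A.StronglyConnectedGraph)
    (hap : A.AperiodicGraph) :
    ∃ (ζ : Fin N → ℝ) (C α : ℝ),
      (∀ i, 0 ≤ ζ i) ∧ (∑ i, ζ i = 1) ∧ ζ ᵥ* A = ζ ∧
      0 < C ∧ 0 < α ∧
      ∀ (x0 : Fin N → ℝ) (t : ℝ), 0 ≤ t →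
        ‖(NormedSpace.exp (t • (A - 1))) *ᵥ x0 - (ζ ⬝ᵥ x0) • (fun _ : Fin N => (1 : ℝ))‖
          ≤ C * Real.exp (-α * t) * ‖x0‖ := by
  rcases Nat.eq_zero_or_pos N with hN0 | hNpos
  · exfalso
    subst hN0
    have h2 := hap 2 (fun k hk => by obtain ⟨-, f, -⟩ := hk; exact (f 0).elim0)
    norm_num at h2
  haveI : Nonempty (Fin N) := ⟨⟨0, hNpos⟩⟩
  set E : ℝ → Matrix (Fin N) (Fin N) ℝ := fun t => NormedSpace.exp (t • (A - 1)) with hE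
  have hE_add : ∀ a b : ℝ, E (a + b) = E a * E b := by
    intro a b
    simp only [hE]
    rw [add_smul]
    exact Matrix.exp_add_of_commute _ _ (((Commute.refl (A - 1)).smul_left a).smul_right b)
  set P := E 1 with hP
  have hE_nat : ∀ n : ℕ, E (n : ℝ) = P ^ n := by
    intro n
    induction n with
    | zero => simp only [hE, Nat.cast_zero, zero_smul, NormedSpace.exp_zero, pow_zero]
    | succ n ih =>
      push_cast
      rw [hE_add, ih, pow_succ]
  have hEnn : ∀ t : ℝ, 0 ≤ t → ∀ i j, 0 ≤ E t i j :=
    fun t ht i j => expE_nonneg A hnonneg hrow t ht i j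
  have hErow : ∀ t : ℝ, 0 ≤ t → ∀ i, ∑ j, E t i j = 1 :=
    fun t ht i => expE_rowsum A hnonneg hrow t ht i
  have hPpos : ∀ i j, 0 < P i j := by
    intro i j
    have hentry := expE_entry A hnonneg hrow 1 zero_le_one i j
    rw [hP]; simp only [hE]
    rw [hentry]
    refine mul_pos (Real.exp_pos _) ?_
    obtain ⟨k, hk⟩ : ∃ k : ℕ, 0 < (A ^ k) i j := by
      by_cases hij : i = j
      · exact ⟨0, by subst hij; simp [Matrix.one_apply]⟩
      · obtain ⟨k, -, hw⟩ := hsc i j hij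
        exact ⟨k, walk_pos A hnonneg hw⟩
    have hsum := entry_summable A hnonneg hrow 1 zero_le_one i j
    have hterm : 0 < ((1:ℝ) ^ k / ((k.factorial : ℝ))) * (A ^ k) i j := by positivity
    calc (0:ℝ) < ((1:ℝ) ^ k / ((k.factorial : ℝ))) * (A ^ k) i j := hterm
      _ ≤ ∑' m : ℕ, ((1:ℝ) ^ m / ((m.factorial : ℝ))) * (A ^ m) i j :=
        Summable.le_tsum hsum k (fun m _ =>
          mul_nonneg (by positivity) (pow_entry_nonneg A hnonneg m i j))
  set δ : ℝ := Finset.univ.inf' Finset.univ_nonempty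
      (fun i => Finset.univ.inf' Finset.univ_nonempty (fun j => P i j)) with hδdef
  have hδpos : 0 < δ := by
    rw [hδdef, Finset.lt_inf'_iff]
    intro i _
    rw [Finset.lt_inf'_iff]
    intro j _
    exact hPpos i j
  have hδle : ∀ i j, δ ≤ P i j := by
    intro i j
    refine le_trans (Finset.inf'_le _ (Finset.mem_univ i)) ?_
    exact Finset.inf'_le _ (Finset.mem_univ j)
  set δ0 : ℝ := min δ (1/4) with hδ0def
  have hδ0pos : 0 < δ0 := lt_min hδpos (by norm_num)
  have hδ0le : ∀ i j, δ0 ≤ P i j := fun i j => le_trans (min_le_left _ _) (hδle i j)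
  set r : ℝ := 1 - 2 * δ0 with hrdef
  have hδ0q : δ0 ≤ 1/4 := min_le_right _ _
  have hr0 : 0 < r := by rw [hrdef]; linarith
  have hr1 : r < 1 := by rw [hrdef]; linarith
  obtain ⟨ζ, hζ0, hζ1, hζA⟩ := exists_stationary A P hrow hPpos (hErow 1 zero_le_one)
    (fun v hv => vecMul_expE A hnonneg hrow v hv 1 zero_le_one)
  refine ⟨ζ, 2 / r, -Real.log r, hζ0, hζ1, hζA, by positivity, ?_, ?_⟩
  · have := Real.log_neg hr0 hr1
    linarith
  intro x0 t ht
  set n := ⌊t⌋₊ with hn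
  set s := t - n with hs
  have hs0 : 0 ≤ s := sub_nonneg.2 (Nat.floor_le ht)
  set y := E t *ᵥ x0 with hy
  have hoscP : ∀ (m : ℕ) (x : Fin N → ℝ),
      oSup (P ^ m *ᵥ x) - oInf (P ^ m *ᵥ x) ≤ r ^ m * (oSup x - oInf x) := by
    intro m
    induction m with
    | zero => intro x; simp [pow_zero, Matrix.one_mulVec]
    | succ m ih =>
      intro x
      have hsplit : P ^ (m + 1) *ᵥ x = P *ᵥ (P ^ m *ᵥ x) := by
        rw [Matrix.mulVec_mulVec, ← pow_succ']
      rw [hsplit]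
      calc oSup (P *ᵥ (P ^ m *ᵥ x)) - oInf (P *ᵥ (P ^ m *ᵥ x))
          ≤ (1 - 2 * δ0) * (oSup (P ^ m *ᵥ x) - oInf (P ^ m *ᵥ x)) :=
            osc_step P δ0 hδ0pos.le hδ0le (hErow 1 zero_le_one) _
        _ ≤ r * (r ^ m * (oSup x - oInf x)) := by
            rw [← hrdef]
            exact mul_le_mul_of_nonneg_left (ih x) hr0.le
        _ = r ^ (m + 1) * (oSup x - oInf x) := by ring
  have hdecomp : y = E s *ᵥ (P ^ n *ᵥ x0) := by
    rw [hy, Matrix.mulVec_mulVec, ← hE_nat, ← hE_add]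
    congr 2
    rw [hs]
    ring
  have hosc_y : oSup y - oInf y ≤ r ^ n * (oSup x0 - oInf x0) := by
    rw [hdecomp]
    calc oSup (E s *ᵥ (P ^ n *ᵥ x0)) - oInf (E s *ᵥ (P ^ n *ᵥ x0))
        ≤ (1 - 2 * 0) * (oSup (P ^ n *ᵥ x0) - oInf (P ^ n *ᵥ x0)) :=
          osc_step (E s) 0 le_rfl (fun i j => hEnn s hs0 i j) (hErow s hs0) _
      _ = oSup (P ^ n *ᵥ x0) - oInf (P ^ n *ᵥ x0) := by ring
      _ ≤ r ^ n * (oSup x0 - oInf x0) := hoscP n x0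
  have hζE : ζ ᵥ* E t = ζ := vecMul_expE A hnonneg hrow ζ hζA t ht
  have hdot : ζ ⬝ᵥ x0 = ζ ⬝ᵥ y := by
    rw [hy, dotProduct_mulVec, hζE]
  have hosc_x0 : oSup x0 - oInf x0 ≤ 2 * ‖x0‖ := by
    have h1 : oSup x0 ≤ ‖x0‖ := by
      refine Finset.sup'_le _ _ fun i _ => ?_
      have := norm_le_pi_norm x0 i
      rw [Real.norm_eq_abs] at this
      exact le_trans (le_abs_self _) this
    have h2 : -‖x0‖ ≤ oInf x0 := by
      refine Finset.le_inf' _ _ fun i _ => ?_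
      have := norm_le_pi_norm x0 i
      rw [Real.norm_eq_abs] at this
      linarith [abs_le.mp this]
    linarith
  have hrn : (r : ℝ) ^ n ≤ Real.exp (Real.log r * t) / r := by
    have h1 : (r : ℝ) ^ n = r ^ ((n : ℕ) : ℝ) := (Real.rpow_natCast r n).symm
    have h2 : r ^ ((n : ℕ) : ℝ) ≤ r ^ (t - 1) := by
      refine Real.rpow_le_rpow_of_exponent_ge hr0 hr1.le ?_
      have := Nat.lt_floor_add_one t
      rw [hn]
      push_cast
      linarith
    have h3 : r ^ (t - 1 : ℝ) = Real.exp (Real.log r * t) / r := by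
      rw [Real.rpow_def_of_pos hr0, mul_sub, mul_one, Real.exp_sub, Real.exp_log hr0]
    rw [h1]
    rw [h3] at h2
    exact h2
  have hαt : -(-Real.log r) * t = Real.log r * t := by ring
  rw [hαt]
  have hB0 : (0:ℝ) ≤ 2 / r * Real.exp (Real.log r * t) * ‖x0‖ := by positivity
  rw [pi_norm_le_iff_of_nonneg hB0]
  intro i
  have hcoord : (E t *ᵥ x0 - (ζ ⬝ᵥ x0) • (fun _ : Fin N => (1 : ℝ))) i
      = y i - ζ ⬝ᵥ y := by
    simp only [Pi.sub_apply, Pi.smul_apply, smul_eq_mul, mul_one, hy, hdot]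
  rw [hcoord, Real.norm_eq_abs]
  obtain ⟨hd1, hd2⟩ := dot_sandwich ζ y hζ0 hζ1
  have hup : y i ≤ oSup y := le_oSup y i
  have hlo : oInf y ≤ y i := oInf_le y i
  have habs : |y i - ζ ⬝ᵥ y| ≤ oSup y - oInf y := abs_le.2 ⟨by linarith, by linarith⟩
  have hosc0 : 0 ≤ oSup x0 - oInf x0 := sub_nonneg.2 (oInf_le_oSup x0)
  calc |y i - ζ ⬝ᵥ y| ≤ oSup y - oInf y := habs
    _ ≤ r ^ n * (oSup x0 - oInf x0) := hosc_y
    _ ≤ r ^ n * (2 * ‖x0‖) := mul_le_mul_of_nonneg_left hosc_x0 (pow_nonneg hr0.le n)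
    _ ≤ (Real.exp (Real.log r * t) / r) * (2 * ‖x0‖) :=
        mul_le_mul_of_nonneg_right hrn (by positivity)
    _ = 2 / r * Real.exp (Real.log r * t) * ‖x0‖ := by ring
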